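/- Let X be a set, E an equivalence relation on X, and G a graphing of E with diameter at most 2. Fix an E-class C and a binary relation M on C (thought of as 'mutual genericity') such that (i) no edge of G connects two M-related points of C, and (ii) there exist x, y ∈ C such that every z ∈ C satisfies M(x,z) or M(y,z), and M is irreflexive. Then we reach a contradiction: such G cannot exist. -/
import Mathlib


/-- The initial segment `x↾n` of a real `x ∈ 2^ℕ`, as a binary string. -/
def restrictSeq (x : ℕ → Bool) (n : ℕ) : List Bool := List.ofFn (fun i : Fin n => x i)

/-- A set of strings is dense if every string has an extension in it. -/
def DenseStr (D : Set (List Bool)) : Prop := ∀ σ : List Bool, ∃ τ, σ <+: τ ∧ τ ∈ D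

/-- A real meets a set of strings if some initial segment of it lies in the set. -/
def MeetsReal (x : ℕ → Bool) (A : Set (List Bool)) : Prop := ∃ n, restrictSeq x n ∈ A

/-- A real avoids a set of strings if no extension of some initial segment lies in the set. -/
def AvoidsReal (x : ℕ → Bool) (A : Set (List Bool)) : Prop :=
  ∃ n, ∀ τ, restrictSeq x n <+: τ → τ ∉ A

/-- A set of pairs of strings is dense if every pair has a coordinatewise extension in it. -/
def DensePair (D : Set (List Bool × List Bool)) : Prop :=
  ∀ σ τ : List Bool, ∃ σ' τ', σ <+: σ' ∧ τ <+: τ' ∧ (σ', τ') ∈ D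

/-- A pair of strings meets a set of pairs of strings if a pair of initial segments lies in it. -/
def MeetsPairStr (α β : List Bool) (D : Set (List Bool × List Bool)) : Prop :=
  ∃ α' β', α' <+: α ∧ β' <+: β ∧ (α', β') ∈ D

/-- A pair of reals meets a set of pairs of strings if a pair of initial segments lies in it. -/
def MeetsPairReal (x y : ℕ → Bool) (D : Set (List Bool × List Bool)) : Prop :=
  ∃ a b, (restrictSeq x a, restrictSeq y b) ∈ D

/-- `x` agrees with the string `s` on the interval `[k, k + |s|)`. -/
def AgreesOn (x : ℕ → Bool) (k : ℕ) (s : List Bool) : Prop :=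
  ∀ i, (h : i < s.length) → x (k + i) = s[i]

/-- A graphing of diameter at most 2 cannot exist when some class `C` carries an irreflexive
"mutual genericity" relation `M` such that no edge joins `M`-related points of `C` and two
points of `C` jointly `M`-dominate all of `C`. -/
theorem stmt_12 {X : Type*} (E : X → X → Prop) (hEquiv : Equivalence E)
    (G : X → X → Prop) (hsymm : ∀ u v, G u v → G v u) (hirrefl : ∀ u, ¬ G u u)
    (hgraphing : ∀ u v, E u v ↔ Relation.ReflTransGen G u v)
    (hdiam : ∀ u v, E u v → u = v ∨ G u v ∨ ∃ w, G u w ∧ G w v)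
    (C : Set X) (hCclass : ∀ u ∈ C, ∀ v, v ∈ C ↔ E u v)
    (M : X → X → Prop)
    (hNoEdge : ∀ u ∈ C, ∀ v ∈ C, M u v → ¬ G u v)
    (hMirrefl : ∀ u, ¬ M u u)
    (x : X) (hx : x ∈ C) (y : X) (hy : y ∈ C)
    (hdom : ∀ z ∈ C, M x z ∨ M y z) :
    False := by
  have hMyx : M y x := (hdom x hx).resolve_left (hMirrefl x)
  have hMxy : M x y := (hdom y hy).resolve_right (hMirrefl y)
  have hExy : E x y := ((hCclass x hx y).mp hy)
  rcases hdiam x y hExy with rfl | hG | ⟨w, hxw, hwy⟩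
  · exact hMirrefl x hMxy
  · exact hNoEdge x hx y hy hMxy hG
  · have hExw : E x w := (hgraphing x w).mpr (Relation.ReflTransGen.single hxw)
    have hwC : w ∈ C := (hCclass x hx w).mpr hExw
    rcases hdom w hwC with h | h
    · exact hNoEdge x hx w hwC h hxw
    · exact hNoEdge y hy w hwC h (hsymm w y hwy)
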